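/- Assume n ≥ 3, a_{i,j} = 0 for all distinct i, j ≤ n−1, and a_{i,n} > 0 for all i ≤ n−1 (so the dual graph of A is a star with root n in which every other vertex is a leaf). Set Δ_n = a_{n,n} − Σ_{i=1}^{n−1} a_{i,n}²/a_{i,i}. Then A satisfies (NN) if and only if the following three conditions hold: (1) a_{i,i} + a_{i,n} < 0 for all i ≤ n−1; (2) a_{i,i}·a_{j,j}·Δ_n + a_{j,n}·(a_{i,i}·a_{j,n} − a_{j,j}·a_{i,n}) < 0 for all distinct i, j ≤ n−1; (3) (a_{i,n}/a_{i,i})·(a_{i,i} + a_{i,n}) + Δ_n < 0 for all i ≤ n−1. -/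

import Mathlib

/-- `A` is negative definite: `xᵀAx < 0` for every nonzero real vector `x`. -/
def NegDefQ {V : Type*} [Fintype V] (A : Matrix V V ℚ) : Prop :=
  ∀ x : V → ℝ, x ≠ 0 → ∑ i, ∑ j, x i * (A i j : ℝ) * x j < 0

/-- Numerical Nash condition `NN_(i,j)`: for every rational vector `C` with nonpositive
entries there is an integer vector `X` with positive entries such that `(AX)_k ≤ C_k`
for all `k` and `X i < X j`. -/
def NashNN {V : Type*} [Fintype V] (A : Matrix V V ℚ) (i j : V) : Prop :=
  ∀ C : V → ℚ, (∀ k, C k ≤ 0) →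
    ∃ X : V → ℤ, (∀ k, 0 < X k) ∧ (∀ k, ∑ t, A k t * (X t : ℚ) ≤ C k) ∧ X i < X j

/-- Condition `(NN)`: `NN_(i,j)` for every ordered pair of distinct indices. -/
def NashNNAll {V : Type*} [Fintype V] (A : Matrix V V ℚ) : Prop :=
  ∀ i j : V, i ≠ j → NashNN A i j

open Finset

/-- A positive rational vector with `Ax < 0` (componentwise) and `x i < x j` yields `NashNN`. -/
lemma ratSolAux {n : ℕ} (A : Matrix (Fin n) (Fin n) ℚ) (i j : Fin n) (x : Fin n → ℚ)
    (hx : ∀ k, 0 < x k) (hAx : ∀ k, ∑ t, A k t * x t < 0) (hij : x i < x j) :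
    NashNN A i j := by
  intro C hC
  set D : ℤ := ∏ k, ((x k).den : ℤ) with hDdef
  have hD : (0:ℤ) < D :=
    Finset.prod_pos fun k _ => by exact_mod_cast (x k).den_pos
  set X0 : Fin n → ℤ := fun k => (x k).num * ∏ t ∈ univ.erase k, ((x t).den : ℤ) with hX0def
  have hcast : ∀ k, ((X0 k : ℚ)) = (D : ℚ) * x k := by
    intro k
    have h1 : ((x k).den : ℤ) * ∏ t ∈ univ.erase k, ((x t).den : ℤ) = D :=
      Finset.mul_prod_erase univ (fun t => ((x t).den : ℤ)) (mem_univ k)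
    have h2 : ((x k).den : ℚ) * x k = (x k).num := by
      have := Rat.num_div_den (x k)
      rw [mul_comm]; exact Rat.mul_den_eq_num (x k)
    calc ((X0 k : ℚ)) = ((x k).num : ℚ) * ∏ t ∈ univ.erase k, ((x t).den : ℚ) := by
          rw [hX0def]; push_cast; ring
      _ = (((x k).den : ℚ) * x k) * ∏ t ∈ univ.erase k, ((x t).den : ℚ) := by rw [h2]
      _ = (D : ℚ) * x k := by rw [← h1]; push_cast; ring
  have hX0pos : ∀ k, 0 < X0 k := by
    intro k
    have : (0:ℚ) < (X0 k : ℚ) := by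
      rw [hcast k]; exact mul_pos (by exact_mod_cast hD) (hx k)
    exact_mod_cast this
  have hne : (Finset.univ : Finset (Fin n)).Nonempty := ⟨i, mem_univ i⟩
  obtain ⟨m, hm⟩ := exists_nat_gt (Finset.univ.sup' hne fun k => C k / ((D:ℚ) * (∑ t, A k t * x t)))
  refine ⟨fun k => ((m:ℤ)+1) * X0 k, ?_, ?_, ?_⟩
  · intro k; exact mul_pos (by positivity) (hX0pos k)
  · intro k
    have hDs : (D:ℚ) * (∑ t, A k t * x t) < 0 :=
      mul_neg_of_pos_of_neg (by exact_mod_cast hD) (hAx k)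
    have hq : C k / ((D:ℚ) * (∑ t, A k t * x t)) < (m:ℚ) :=
      lt_of_le_of_lt (Finset.le_sup' (f := fun k => C k / ((D:ℚ) * (∑ t, A k t * x t))) (mem_univ k)) hm
    have hq2 : ((m:ℚ)+1) * ((D:ℚ) * (∑ t, A k t * x t)) ≤ C k := by
      rw [div_lt_iff_of_neg hDs] at hq
      nlinarith
    calc ∑ t, A k t * ((((m:ℤ)+1) * X0 t : ℤ) : ℚ)
        = ((m:ℚ)+1) * ((D:ℚ) * (∑ t, A k t * x t)) := by
          rw [Finset.mul_sum, Finset.mul_sum]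
          refine Finset.sum_congr rfl fun t _ => ?_
          push_cast [hcast t]; ring
      _ ≤ C k := hq2
  · have hlt : (X0 i : ℚ) < (X0 j : ℚ) := by
      rw [hcast i, hcast j]
      exact mul_lt_mul_of_pos_left hij (by exact_mod_cast hD)
    have h3 : X0 i < X0 j := by exact_mod_cast hlt
    exact mul_lt_mul_of_pos_left h3 (by positivity)

/-- `NashNN` yields a positive integer vector with `AX < 0` and `X i < X j`. -/
lemma intSolAux {n : ℕ} (A : Matrix (Fin n) (Fin n) ℚ) (i j : Fin n) (h : NashNN A i j) :
    ∃ X : Fin n → ℤ, (∀ k, 0 < X k) ∧ (∀ k, ∑ t, A k t * (X t : ℚ) < 0) ∧ X i < X j := by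
  obtain ⟨X, h1, h2, h3⟩ := h (fun _ => -1) (fun _ => by norm_num)
  exact ⟨X, h1, fun k => lt_of_le_of_lt (h2 k) (by norm_num), h3⟩

set_option maxHeartbeats 1600000 in
theorem polygon_singularity_NN_iff (n : ℕ) (hn : 3 ≤ n) (A : Matrix (Fin n) (Fin n) ℚ)
    (hsym : ∀ i j, A i j = A j i) (hdiag : ∀ i, A i i < 0)
    (hoff : ∀ i j, i ≠ j → 0 ≤ A i j) (hneg : NegDefQ A)
    (r : Fin n) (hr : (r : ℕ) = n - 1)
    (hzero : ∀ i j : Fin n, i ≠ j → i ≠ r → j ≠ r → A i j = 0)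
    (hpos : ∀ i : Fin n, i ≠ r → 0 < A i r) :
    NashNNAll A ↔
      ((∀ i : Fin n, i ≠ r → A i i + A i r < 0) ∧
       (∀ i j : Fin n, i ≠ r → j ≠ r → i ≠ j →
          A i i * A j j * (A r r - ∑ k ∈ Finset.univ.erase r, (A k r) ^ 2 / A k k) +
            A j r * (A i i * A j r - A j j * A i r) < 0) ∧
       (∀ i : Fin n, i ≠ r →
          (A i r / A i i) * (A i i + A i r) +
            (A r r - ∑ k ∈ Finset.univ.erase r, (A k r) ^ 2 / A k k) < 0)) := by
  classical
  set Δ : ℚ := A r r - ∑ k ∈ Finset.univ.erase r, (A k r) ^ 2 / A k k with hΔdef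
  clear_value Δ
  set b : Fin n → ℚ := fun k => -A k r / A k k with hbdef
  clear_value b
  have hAne : ∀ k, A k k ≠ 0 := fun k => ne_of_lt (hdiag k)
  have hbpos : ∀ k, k ≠ r → 0 < b k := by
    intro k hk
    have e : b k = A k r / (-A k k) := by simp only [hbdef]; ring
    rw [e]; exact div_pos (hpos k hk) (by linarith [hdiag k])
  have hAb : ∀ k, k ≠ r → A k k * b k = -A k r := by
    intro k hk; simp only [hbdef]; field_simp [hAne k]
  have hΔsum : Δ = A r r + ∑ k ∈ univ.erase r, A k r * b k := by
    rw [hΔdef]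
    clear hΔdef
    have : ∑ k ∈ univ.erase r, A k r * b k = -∑ k ∈ univ.erase r, (A k r)^2 / A k k := by
      rw [← Finset.sum_neg_distrib]
      refine Finset.sum_congr rfl fun k hk => ?_
      simp only [hbdef]; ring
    rw [this]; ring
  have rowLeaf : ∀ (y : Fin n → ℚ) (k : Fin n), k ≠ r →
      ∑ t, A k t * y t = A k k * y k + A k r * y r := by
    intro y k hk
    have hz : ∀ t ∈ (univ : Finset (Fin n)), t ∉ ({k, r} : Finset (Fin n)) → A k t * y t = 0 := by
      intro t _ ht
      simp only [Finset.mem_insert, Finset.mem_singleton] at ht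
      push_neg at ht
      rw [hzero k t (fun e => ht.1 e.symm) hk ht.2, zero_mul]
    rw [← Finset.sum_subset (Finset.subset_univ _) hz, Finset.sum_pair hk]
  have rowRoot : ∀ (y : Fin n → ℚ),
      ∑ t, A r t * y t = A r r * y r + ∑ k ∈ univ.erase r, A k r * y k := by
    intro y
    rw [← Finset.add_sum_erase univ (fun t => A r t * y t) (mem_univ r)]
    congr 1
    exact Finset.sum_congr rfl fun k _ => by rw [hsym r k]
  -- Δ < 0 from negative definiteness
  have hΔneg : Δ < 0 := by
    set xq : Fin n → ℚ := fun k => if k = r then 1 else b k with hxq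
    have hxqr : xq r = 1 := by rw [hxq]; simp
    have hxqk : ∀ k, k ≠ r → xq k = b k := by intro k hk; rw [hxq]; simp [hk]
    clear_value xq
    have hx0 : (fun k => ((xq k : ℚ) : ℝ)) ≠ 0 := by
      intro h
      have := congrFun h r
      rw [hxqr] at this
      norm_num at this
    have hQ := hneg _ hx0
    have hc : ((∑ i, ∑ j, xq i * A i j * xq j : ℚ) : ℝ)
        = ∑ i, ∑ j, ((xq i : ℝ)) * (A i j : ℝ) * ((xq j : ℝ)) := by
      push_cast; rfl
    rw [← hc] at hQ
    have hQq : ∑ i, ∑ j, xq i * A i j * xq j < 0 := by exact_mod_cast hQ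
    have hrowval : ∀ i ∈ univ.erase r, ∑ j, xq i * A i j * xq j = 0 := by
      intro i hi
      have hi' := (mem_erase.mp hi).1
      have e1 : ∑ j, xq i * A i j * xq j = xq i * ∑ j, A i j * xq j := by
        rw [Finset.mul_sum]
        exact Finset.sum_congr rfl fun j _ => by ring
      rw [e1, rowLeaf xq i hi']
      rw [hxqk i hi', hxqr, mul_one, hAb i hi']
      ring
    rw [← Finset.add_sum_erase univ (fun i => ∑ j, xq i * A i j * xq j) (mem_univ r),
      Finset.sum_eq_zero hrowval, add_zero] at hQq
    have e2 : ∑ j, xq r * A r j * xq j = A r r + ∑ k ∈ univ.erase r, A k r * b k := by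
      have e3 : ∑ j, xq r * A r j * xq j = ∑ j, A r j * xq j := by
        refine Finset.sum_congr rfl fun j _ => ?_
        rw [hxqr, one_mul]
      rw [e3, rowRoot xq, hxqr, mul_one]
      congr 1
      exact Finset.sum_congr rfl fun k hk => by
        rw [hxqk k (mem_erase.mp hk).1]
    rw [e2] at hQq
    rw [hΔsum]
    exact hQq
  -- nonemptiness and the sum S
  have hcard : (univ.erase r).Nonempty := by
    apply Finset.card_pos.mp
    rw [Finset.card_erase_of_mem (mem_univ r), Finset.card_univ, Fintype.card_fin]
    omega
  set S : ℚ := ∑ k ∈ univ.erase r, A k r with hSdef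
  clear_value S
  have hS : 0 < S := by
    rw [hSdef]; exact Finset.sum_pos (fun k hk => hpos k (mem_erase.mp hk).1) hcard
  -- key algebraic identity for condition (2)
  have keyId : ∀ i j : Fin n, i ≠ r → j ≠ r →
      A i i * A j j * Δ + A j r * (A i i * A j r - A j j * A i r)
        = (A i i * A j j) * (A j r * (b i - b j) + Δ) := by
    intro i j hi hj
    have e1 := hAb i hi
    have e2 := hAb j hj
    linear_combination (-(A j j * A j r)) * e1 + (A i i * A j r) * e2
  -- identity for condition (3)
  have idn3 : ∀ j : Fin n, j ≠ r →
      (A j r / A j j) * (A j j + A j r) + Δ = A j r * (1 - b j) + Δ := by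
    intro j hj
    have : (A j r / A j j) * (A j j + A j r) = A j r * (1 - b j) := by
      simp only [hbdef]
      field_simp [hAne j]
      ring
    rw [this]
  constructor
  · -- forward direction
    intro h
    -- lower bounds for any negative-row vector
    have hlowAll : ∀ (y : Fin n → ℚ), (∀ k, ∑ t, A k t * y t < 0) →
        ∀ k, k ≠ r → b k * y r < y k := by
      intro y hy k hk
      have hrow := hy k
      rw [rowLeaf y k hk] at hrow
      simp only [hbdef]
      rw [div_mul_eq_mul_div, div_lt_iff_of_neg (hdiag k)]
      linarith
    have hupAll : ∀ (j : Fin n), j ≠ r → ∀ (y : Fin n → ℚ),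
        (∀ k, ∑ t, A k t * y t < 0) →
        A j r * y j < (A j r * b j - Δ) * y r := by
      intro j hj y hy
      have hjmem : j ∈ univ.erase r := mem_erase.mpr ⟨hj, mem_univ j⟩
      have hrr := hy r
      rw [rowRoot y, ← Finset.add_sum_erase (univ.erase r) (fun k => A k r * y k) hjmem] at hrr
      have hQ : (∑ k ∈ (univ.erase r).erase j, A k r * b k) * y r
          ≤ ∑ k ∈ (univ.erase r).erase j, A k r * y k := by
        rw [Finset.sum_mul]
        apply Finset.sum_le_sum
        intro k hk
        have hk1 : k ≠ r := (mem_erase.mp (mem_erase.mp hk).2).1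
        have hl := hlowAll y hy k hk1
        nlinarith [hpos k hk1]
      have hΔsplit : Δ = A r r + (A j r * b j + ∑ k ∈ (univ.erase r).erase j, A k r * b k) := by
        rw [hΔsum, ← Finset.add_sum_erase (univ.erase r) (fun k => A k r * b k) hjmem]
      have hexp : (A j r * b j - Δ) * y r
          = -(A r r * y r) - (∑ k ∈ (univ.erase r).erase j, A k r * b k) * y r := by
        rw [hΔsplit]; ring
      rw [hexp]
      linarith
    refine ⟨?_, ?_, ?_⟩
    · -- condition (1)
      intro i hi
      obtain ⟨X, hXpos, hXrow, hXij⟩ := intSolAux A i r (h i r hi)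
      have hrow := hXrow i
      have e := rowLeaf (fun k => ((X k : ℚ))) i hi
      beta_reduce at e
      rw [e] at hrow
      have hyr : (0:ℚ) < (X r : ℚ) := by exact_mod_cast hXpos r
      have hyij : ((X i : ℚ)) < ((X r : ℚ)) := by exact_mod_cast hXij
      nlinarith [hdiag i, mul_lt_mul_of_neg_left hyij (hdiag i)]
    · -- condition (2)
      intro i j hi hj hij
      obtain ⟨X, hXpos, hXrow, hXij⟩ := intSolAux A i j (h i j hij)
      have hyr : (0:ℚ) < (X r : ℚ) := by exact_mod_cast hXpos r
      have hyij : ((X i : ℚ)) < ((X j : ℚ)) := by exact_mod_cast hXij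
      have hup : A j r * ((X j : ℚ)) < (A j r * b j - Δ) * ((X r : ℚ)) :=
        hupAll j hj (fun k => ((X k : ℚ))) hXrow
      have hlow : b i * ((X r : ℚ)) < ((X i : ℚ)) :=
        hlowAll (fun k => ((X k : ℚ))) hXrow i hi
      have hAjr := hpos j hj
      have c4 : (A j r * b i) * ((X r:ℚ)) < (A j r * b j - Δ) * ((X r:ℚ)) := by
        have c1 : A j r * (b i * ((X r:ℚ))) < A j r * ((X i:ℚ)) := mul_lt_mul_of_pos_left hlow hAjr
        have c2 : A j r * ((X i:ℚ)) < A j r * ((X j:ℚ)) := mul_lt_mul_of_pos_left hyij hAjr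
        nlinarith
      have step : A j r * b i < A j r * b j - Δ := lt_of_mul_lt_mul_right c4 hyr.le
      rw [keyId i j hi hj]
      apply mul_neg_of_pos_of_neg (mul_pos_of_neg_of_neg (hdiag i) (hdiag j))
      nlinarith
    · -- condition (3)
      intro i hi
      obtain ⟨X, hXpos, hXrow, hXij⟩ := intSolAux A r i (h r i (Ne.symm hi))
      have hyr : (0:ℚ) < (X r : ℚ) := by exact_mod_cast hXpos r
      have hyij : ((X r : ℚ)) < ((X i : ℚ)) := by exact_mod_cast hXij
      have hup : A i r * ((X i : ℚ)) < (A i r * b i - Δ) * ((X r : ℚ)) :=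
        hupAll i hi (fun k => ((X k : ℚ))) hXrow
      have hAir := hpos i hi
      have c4 : (A i r) * ((X r:ℚ)) < (A i r * b i - Δ) * ((X r:ℚ)) :=
        lt_trans (mul_lt_mul_of_pos_left hyij hAir) hup
      have step : A i r < A i r * b i - Δ := lt_of_mul_lt_mul_right c4 hyr.le
      rw [idn3 i hi]
      nlinarith
  · -- backward direction
    rintro ⟨h1, h2, h3⟩ i j hij
    have hb1 : ∀ k, k ≠ r → b k < 1 := by
      intro k hk
      have e : b k = A k r / (-A k k) := by simp only [hbdef]; ring
      rw [e, div_lt_one (by linarith [hdiag k])]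
      linarith [h1 k hk]
    by_cases hjr : j = r
    · -- pair (i, r)
      subst j
      have hi : i ≠ r := hij
      set ε : ℚ := min (1 - b i) (-Δ / S) / 2 with hεdef
      clear_value ε
      have hεpos : 0 < ε := by
        rw [hεdef]
        apply div_pos _ two_pos
        exact lt_min (by linarith [hb1 i hi]) (div_pos (by linarith) hS)
      have hε1 : ε ≤ (1 - b i) / 2 := by
        have := min_le_left (1 - b i) (-Δ / S)
        linarith [hεdef.le, hεdef.ge]
      have hε2 : ε * S ≤ -Δ / 2 := by
        have hm : ε ≤ (-Δ / S) / 2 := by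
          have := min_le_right (1 - b i) (-Δ / S)
          linarith [hεdef.le, hεdef.ge]
        have hq : ((-Δ / S) / 2) * S = -Δ / 2 := by
          field_simp
        calc ε * S ≤ ((-Δ / S) / 2) * S := mul_le_mul_of_nonneg_right hm hS.le
          _ = -Δ / 2 := hq
      apply ratSolAux A i r (fun k => if k = r then 1 else b k + ε)
      · intro k
        by_cases hk : k = r
        · rw [if_pos hk]; norm_num
        · rw [if_neg hk]; linarith [hbpos k hk]
      · intro k
        by_cases hk : k = r
        · subst k
          rw [rowRoot]
          simp only [eq_self_iff_true, if_true, mul_one]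
          have hsum : ∑ k ∈ univ.erase r, A k r * (if k = r then 1 else b k + ε)
              = (∑ k ∈ univ.erase r, A k r * b k) + ε * S := by
            rw [hSdef, Finset.mul_sum, ← Finset.sum_add_distrib]
            refine Finset.sum_congr rfl fun k hk => ?_
            rw [if_neg (mem_erase.mp hk).1]; ring
          rw [hsum]
          have := hΔsum
          linarith
        · rw [rowLeaf _ k hk, if_neg hk, if_pos rfl, mul_one]
          have e := hAb k hk
          have m := mul_neg_of_neg_of_pos (hdiag k) hεpos
          nlinarith
      · rw [if_neg hi, if_pos rfl]
        linarith [hb1 i hi]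
    · -- pair (i, j) with j ≠ r
      set t : ℚ := if i = r then 1 else b i with htdef
      clear_value t
      have hγ : A j r * (t - b j) + Δ < 0 := by
        by_cases hir : i = r
        · rw [htdef, if_pos hir]
          have h3j := h3 j hjr
          rw [idn3 j hjr] at h3j
          linarith
        · rw [htdef, if_neg hir]
          have hcc := h2 i j hir hjr hij
          rw [keyId i j hir hjr] at hcc
          have hprod : 0 < A i i * A j j := mul_pos_of_neg_of_neg (hdiag i) (hdiag j)
          by_contra hcon
          push_neg at hcon
          nlinarith
      set μ : ℚ := min (-Δ) (-(A j r * (t - b j) + Δ)) with hμdef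
      clear_value μ
      have hμpos : 0 < μ := by rw [hμdef]; exact lt_min (by linarith) (by linarith)
      have hμ1 : μ ≤ -Δ := by rw [hμdef]; exact min_le_left _ _
      have hμ2 : μ ≤ -(A j r * (t - b j) + Δ) := by rw [hμdef]; exact min_le_right _ _
      have hSA : 0 < S + A j r := by linarith [hpos j hjr]
      set ε : ℚ := μ / (2 * (S + A j r)) with hεdef
      clear_value ε
      have hεpos : 0 < ε := by rw [hεdef]; exact div_pos hμpos (by linarith)
      have hεval : ε * S + ε * A j r = μ / 2 := by
        rw [hεdef]
        field_simp
      have hmaxb : A j r * (max t (b j) - b j) ≤ -Δ - μ := by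
        rcases max_choice t (b j) with hm | hm <;> rw [hm]
        · linarith
        · have h0 : A j r * (b j - b j) = 0 := by ring
          rw [h0]; linarith
      apply ratSolAux A i j
        (x := fun k => if k = r then 1 else if k = j then max t (b j) + 2*ε else b k + ε)
      · intro k
        by_cases hk : k = r
        · rw [if_pos hk]; norm_num
        · rw [if_neg hk]
          by_cases hkj : k = j
          · rw [if_pos hkj]
            have := hbpos j hjr
            have := le_max_right t (b j)
            linarith
          · rw [if_neg hkj]
            linarith [hbpos k hk]
      · intro k
        by_cases hk : k = r
        · subst k
          have hjmem : j ∈ univ.erase r := mem_erase.mpr ⟨hjr, mem_univ j⟩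
          rw [rowRoot, ← Finset.add_sum_erase ((univ.erase r))
            (fun k => A k r * (if k = r then 1 else if k = j then max t (b j) + 2*ε else b k + ε)) hjmem]
          simp only [eq_self_iff_true, if_true, if_neg hjr, mul_one]
          have hsum2 : ∑ k ∈ (univ.erase r).erase j,
              A k r * (if k = r then 1 else if k = j then max t (b j) + 2*ε else b k + ε)
              = (∑ k ∈ (univ.erase r).erase j, A k r * b k)
                + ε * (∑ k ∈ (univ.erase r).erase j, A k r) := by
            rw [Finset.mul_sum, ← Finset.sum_add_distrib]
            refine Finset.sum_congr rfl fun k hk => ?_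
            rw [if_neg (mem_erase.mp (mem_erase.mp hk).2).1, if_neg (mem_erase.mp hk).1]
            ring
          rw [hsum2]
          have hT : A j r * b j + ∑ k ∈ (univ.erase r).erase j, A k r * b k
              = ∑ k ∈ univ.erase r, A k r * b k :=
            Finset.add_sum_erase (univ.erase r) (fun k => A k r * b k) hjmem
          have hS' : A j r + ∑ k ∈ (univ.erase r).erase j, A k r = S := by
            rw [hSdef]
            exact Finset.add_sum_erase (univ.erase r) (fun k => A k r) hjmem
          have hεS' : ε * (∑ k ∈ (univ.erase r).erase j, A k r) = ε * S - ε * A j r := by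
            rw [← hS']; ring
          have hmax' : A j r * max t (b j) - A j r * b j ≤ -Δ - μ := by
            have := hmaxb; nlinarith [hmaxb]
          have hΔs := hΔsum
          nlinarith [hmax', hεval, hεS', hT, hΔs, hμpos]
        · rw [rowLeaf _ k hk, if_neg hk, if_pos rfl, mul_one]
          by_cases hkj : k = j
          · rw [if_pos hkj, hkj]
            have h0 : 0 < max t (b j) - b j + 2*ε := by
              have := le_max_right t (b j)
              linarith
            have e1 : A j j * (max t (b j) + 2*ε) + A j r
                = A j j * (max t (b j) - b j + 2*ε) + (A j j * b j + A j r) := by ring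
            rw [e1, hAb j hjr]
            have := mul_neg_of_neg_of_pos (hdiag j) h0
            linarith
          · rw [if_neg hkj]
            have e := hAb k hk
            have m := mul_neg_of_neg_of_pos (hdiag k) hεpos
            nlinarith
      · -- x i < x j
        rw [if_neg hjr, if_pos rfl]
        by_cases hir : i = r
        · rw [if_pos hir]
          have : t = 1 := by rw [htdef, if_pos hir]
          have := le_max_left t (b j)
          linarith
        · rw [if_neg hir, if_neg hij]
          have : t = b i := by rw [htdef, if_neg hir]
          have := le_max_left t (b j)
          linarith
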